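/- arXiv:1904.10345 — 2 statements merged into one kernel-verified Lean document; each statement's English description precedes it below -/
import Mathlib

section
/- Under conditional independence of T and C given W and the positivity assumption, the conditional expectation satisfies E[Δ/G_0(T̃|W) | T, W] = 1 almost surely, where T̃ = min(T,C), Δ = 1{T ≤ C}, and G_0(u|w) = P(C > u | W = w). -/
open MeasureTheory ProbabilityTheory Filter Set

/-- `E[Δ/G₀(T̃|W) | T, W] = 1` a.s. -/
theorem ipcw_condexp_one
    {Ω 𝓦 : Type*} [MeasurableSpace Ω] [StandardBorelSpace Ω] [Nonempty Ω]
    [MeasurableSpace 𝓦]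
    (μ : Measure Ω) [IsProbabilityMeasure μ]
    (T C : Ω → ℝ) (W : Ω → 𝓦)
    (hT : Measurable T) (hC : Measurable C) (hW : Measurable W)
    (hWle : MeasurableSpace.comap W inferInstance ≤ (inferInstance : MeasurableSpace Ω))
    (hTWle : MeasurableSpace.comap (fun ω => (T ω, W ω)) inferInstance
        ≤ (inferInstance : MeasurableSpace Ω))
    (hTpos : ∀ ω, 0 < T ω) (hCpos : ∀ ω, 0 < C ω)
    (hindep : CondIndepFun (MeasurableSpace.comap W inferInstance) hWle T C μ)
    (G₀ : ℝ → 𝓦 → ℝ)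
    (hG₀meas : Measurable (Function.uncurry G₀))
    (hG₀cont : ∀ w, Continuous fun u => G₀ u w)
    (hG₀ : ∀ u : ℝ,
      (fun ω => G₀ u (W ω)) =ᵐ[μ]
        μ[(fun ω => if u < C ω then (1:ℝ) else 0) | MeasurableSpace.comap W inferInstance])
    (ε : ℝ) (hε : 0 < ε) (hpos : ∀ᵐ ω ∂μ, ε ≤ G₀ (T ω) (W ω)) :
    μ[(fun ω => (if T ω ≤ C ω then (1:ℝ) else 0) / G₀ (min (T ω) (C ω)) (W ω))
        | MeasurableSpace.comap (fun ω => (T ω, W ω)) inferInstance]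
      =ᵐ[μ] fun _ => (1 : ℝ) := by
  classical
  have hp_meas : Measurable (fun ω => (T ω, W ω)) := hT.prodMk hW
  haveI hfin1 : IsFiniteMeasure (μ.trim hWle) :=
    ⟨by rw [trim_measurableSet_eq hWle MeasurableSet.univ]; exact measure_lt_top μ _⟩
  haveI hfin2 : IsFiniteMeasure (μ.trim hTWle) :=
    ⟨by rw [trim_measurableSet_eq hTWle MeasurableSet.univ]; exact measure_lt_top μ _⟩
  have hG₀u : ∀ u : ℝ, Measurable (fun w => G₀ u w) := fun u =>
    hG₀meas.comp (measurable_const.prodMk measurable_id)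
  have hWm : Measurable[MeasurableSpace.comap W inferInstance] W :=
    Measurable.of_comap_le le_rfl
  have hGW : ∀ u : ℝ,
      Measurable[MeasurableSpace.comap W inferInstance] (fun ω => G₀ u (W ω)) :=
    fun u => (hG₀u u).comp hWm
  have hYm : ∀ u : ℝ, Measurable (fun ω => if u < C ω then (1:ℝ) else 0) := fun u =>
    Measurable.ite (measurableSet_lt measurable_const hC) measurable_const measurable_const
  have hYint : ∀ u : ℝ, Integrable (fun ω => if u < C ω then (1:ℝ) else 0) μ := by
    intro u
    refine (integrable_const (1:ℝ)).mono' (hYm u).aestronglyMeasurable ?_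
    filter_upwards with ω
    by_cases h : u < C ω <;> simp [h]
  have hG01 : ∀ u : ℝ, ∀ᵐ ω ∂μ, 0 ≤ G₀ u (W ω) ∧ G₀ u (W ω) ≤ 1 := by
    intro u
    have h0 : (0:Ω → ℝ) ≤ᵐ[μ] fun ω => if u < C ω then (1:ℝ) else 0 := by
      filter_upwards with ω; by_cases h : u < C ω <;> simp [h]
    have h1 : (fun ω => if u < C ω then (1:ℝ) else 0) ≤ᵐ[μ] fun _ => (1:ℝ) := by
      filter_upwards with ω; by_cases h : u < C ω <;> simp [h]
    have hup : μ[(fun ω => if u < C ω then (1:ℝ) else 0)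
          | MeasurableSpace.comap W inferInstance]
        ≤ᵐ[μ] μ[(fun _ => (1:ℝ)) | MeasurableSpace.comap W inferInstance] :=
      condExp_mono (hYint u) (integrable_const 1) h1
    filter_upwards [hG₀ u, condExp_nonneg (m := MeasurableSpace.comap W inferInstance) h0,
      hup] with ω hω h0ω h1ω
    rw [hω]
    refine ⟨h0ω, h1ω.trans ?_⟩
    rw [condExp_const hWle (1:ℝ)]
  have rect : ∀ (u : ℝ) (s : Set ℝ) (v : Set 𝓦), MeasurableSet s → MeasurableSet v →
      ∫ ω in T ⁻¹' s ∩ W ⁻¹' v, (if u < C ω then (1:ℝ) else 0) ∂μ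
        = ∫ ω in T ⁻¹' s ∩ W ⁻¹' v, G₀ u (W ω) ∂μ := by
    intro u s v hs hv
    have hvW : MeasurableSet[MeasurableSpace.comap W inferInstance] (W ⁻¹' v) := ⟨v, hv, rfl⟩
    have hVm : MeasurableSet (W ⁻¹' v) := hW hv
    have hAm : MeasurableSet (T ⁻¹' s) := hT hs
    have hBm : MeasurableSet (C ⁻¹' Set.Ioi u) := hC measurableSet_Ioi
    have hYeq : (fun ω => if u < C ω then (1:ℝ) else 0)
        = (C ⁻¹' Set.Ioi u).indicator (fun _ => (1:ℝ)) := by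
      funext ω; simp [Set.indicator_apply, Set.mem_preimage, Set.mem_Ioi]
    have hprod := (condIndepFun_iff_condExp_inter_preimage_eq_mul
        (m' := MeasurableSpace.comap W inferInstance) (hm' := hWle) hT hC).mp hindep
        s (Set.Ioi u) hs measurableSet_Ioi
    have hBG : (μ⟦C ⁻¹' Set.Ioi u | MeasurableSpace.comap W inferInstance⟧)
        =ᵐ[μ] fun ω => G₀ u (W ω) := by
      rw [← hYeq]; exact (hG₀ u).symm
    have hGsm : StronglyMeasurable[MeasurableSpace.comap W inferInstance]
        (fun ω => G₀ u (W ω)) := (hGW u).stronglyMeasurable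
    have hGb : ∀ᵐ ω ∂μ, ‖G₀ u (W ω)‖ ≤ 1 := by
      filter_upwards [hG01 u] with ω hω
      rw [Real.norm_eq_abs, abs_le]; exact ⟨by linarith [hω.1], hω.2⟩
    have hABint : Integrable ((T ⁻¹' s ∩ C ⁻¹' Set.Ioi u).indicator (fun _ => (1:ℝ))) μ :=
      (integrable_const (1:ℝ)).indicator (hAm.inter hBm)
    have hXint : Integrable ((T ⁻¹' s).indicator (fun _ => (1:ℝ))) μ :=
      (integrable_const (1:ℝ)).indicator hAm
    have hGXint : Integrable
        ((fun ω => G₀ u (W ω)) * (T ⁻¹' s).indicator (fun _ => (1:ℝ))) μ :=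
      hXint.bdd_mul ((hGsm.mono hWle).aestronglyMeasurable) hGb
    have hpull : μ[(fun ω => G₀ u (W ω)) * (T ⁻¹' s).indicator (fun _ => (1:ℝ))
          | MeasurableSpace.comap W inferInstance]
        =ᵐ[μ] (fun ω => G₀ u (W ω)) * μ[(T ⁻¹' s).indicator (fun _ => (1:ℝ))
          | MeasurableSpace.comap W inferInstance] :=
      condExp_stronglyMeasurable_mul_of_bound hWle hGsm hXint 1 hGb
    have chain : ∫ ω in W ⁻¹' v, (T ⁻¹' s ∩ C ⁻¹' Set.Ioi u).indicator (fun _ => (1:ℝ)) ω ∂μ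
        = ∫ ω in W ⁻¹' v, ((fun ω => G₀ u (W ω))
            * (T ⁻¹' s).indicator (fun _ => (1:ℝ))) ω ∂μ := by
      rw [← setIntegral_condExp hWle hABint hvW, ← setIntegral_condExp hWle hGXint hvW]
      refine setIntegral_congr_ae hVm ?_
      filter_upwards [hprod, hBG, hpull] with ω h1 h2 h3 _
      rw [h1, h3]
      simp only [Pi.mul_apply]
      rw [h2, mul_comm]
    have lhs_eq : ∫ ω in T ⁻¹' s ∩ W ⁻¹' v, (if u < C ω then (1:ℝ) else 0) ∂μ
        = ∫ ω in W ⁻¹' v, (T ⁻¹' s ∩ C ⁻¹' Set.Ioi u).indicator (fun _ => (1:ℝ)) ω ∂μ := by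
      rw [setIntegral_indicator (hAm.inter hBm), hYeq,
        setIntegral_indicator hBm]
      have hsets : T ⁻¹' s ∩ W ⁻¹' v ∩ C ⁻¹' Set.Ioi u
          = W ⁻¹' v ∩ (T ⁻¹' s ∩ C ⁻¹' Set.Ioi u) := by
        ext ω
        constructor
        · rintro ⟨⟨h1, h2⟩, h3⟩; exact ⟨h2, h1, h3⟩
        · rintro ⟨h2, h1, h3⟩; exact ⟨⟨h1, h2⟩, h3⟩
      rw [hsets]
    have rhs_eq : ∫ ω in T ⁻¹' s ∩ W ⁻¹' v, G₀ u (W ω) ∂μ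
        = ∫ ω in W ⁻¹' v, ((fun ω => G₀ u (W ω))
            * (T ⁻¹' s).indicator (fun _ => (1:ℝ))) ω ∂μ := by
      have hfe : ∀ ω, ((fun ω => G₀ u (W ω)) * (T ⁻¹' s).indicator (fun _ => (1:ℝ))) ω
          = (T ⁻¹' s).indicator (fun ω => G₀ u (W ω)) ω := by
        intro ω
        simp only [Pi.mul_apply, Set.indicator_apply]
        by_cases h : ω ∈ T ⁻¹' s <;> simp [h]
      simp_rw [hfe]
      rw [setIntegral_indicator hAm, Set.inter_comm]
    rw [lhs_eq, rhs_eq, chain]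
  have key : ∀ (u : ℝ) (H : ℝ × 𝓦 → ENNReal), Measurable H →
      ∫⁻ ω, H (T ω, W ω) * (if u < C ω then 1 else 0) ∂μ
        = ∫⁻ ω, H (T ω, W ω) * ENNReal.ofReal (G₀ u (W ω)) ∂μ := by
    intro u H hH
    set d₁ : Ω → ENNReal := fun ω => if u < C ω then 1 else 0 with hd₁
    set d₂ : Ω → ENNReal := fun ω => ENNReal.ofReal (G₀ u (W ω)) with hd₂
    have hd₁m : Measurable d₁ :=
      Measurable.ite (measurableSet_lt measurable_const hC) measurable_const measurable_const
    have hd₂m : Measurable d₂ := ENNReal.measurable_ofReal.comp ((hG₀u u).comp hW)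
    have hGint : Integrable (fun ω => G₀ u (W ω)) μ := by
      refine (integrable_const (1:ℝ)).mono' ((hG₀u u).comp hW).aestronglyMeasurable ?_
      filter_upwards [hG01 u] with ω hω
      rw [Real.norm_eq_abs, abs_le]; exact ⟨by linarith [hω.1], hω.2⟩
    have hAeq : ∀ (s' : Set ℝ) (v' : Set 𝓦), MeasurableSet s' → MeasurableSet v' →
        (μ.withDensity d₁) (T ⁻¹' s' ∩ W ⁻¹' v')
          = (μ.withDensity d₂) (T ⁻¹' s' ∩ W ⁻¹' v') := by
      intro s' v' hs' hv'
      have hAm : MeasurableSet (T ⁻¹' s' ∩ W ⁻¹' v') := (hT hs').inter (hW hv')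
      rw [withDensity_apply _ hAm, withDensity_apply _ hAm]
      have e1 : ∫⁻ ω in T ⁻¹' s' ∩ W ⁻¹' v', d₁ ω ∂μ
          = ENNReal.ofReal (∫ ω in T ⁻¹' s' ∩ W ⁻¹' v', (if u < C ω then (1:ℝ) else 0) ∂μ) := by
        rw [ofReal_integral_eq_lintegral_ofReal ((hYint u).restrict)
          (Filter.Eventually.of_forall (fun ω => by by_cases h : u < C ω <;> simp [h]))]
        refine lintegral_congr fun ω => ?_
        by_cases h : u < C ω <;> simp [hd₁, h]
      have e2 : ∫⁻ ω in T ⁻¹' s' ∩ W ⁻¹' v', d₂ ω ∂μ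
          = ENNReal.ofReal (∫ ω in T ⁻¹' s' ∩ W ⁻¹' v', G₀ u (W ω) ∂μ) := by
        rw [ofReal_integral_eq_lintegral_ofReal (hGint.restrict)
          (ae_restrict_of_ae ((hG01 u).mono (fun ω hω => hω.1)))]
      rw [e1, e2, rect u s' v' hs' hv']
    have hfd₁ : IsFiniteMeasure (μ.withDensity d₁) := by
      constructor
      rw [withDensity_apply _ MeasurableSet.univ, Measure.restrict_univ]
      calc ∫⁻ ω, d₁ ω ∂μ ≤ ∫⁻ _, 1 ∂μ :=
            lintegral_mono (fun ω => by by_cases h : u < C ω <;> simp [hd₁, h])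
        _ = 1 := by simp
        _ < ⊤ := ENNReal.one_lt_top
    have hfd₂ : IsFiniteMeasure (μ.withDensity d₂) := by
      constructor
      rw [withDensity_apply _ MeasurableSet.univ, Measure.restrict_univ]
      calc ∫⁻ ω, d₂ ω ∂μ ≤ ∫⁻ _, 1 ∂μ := by
            refine lintegral_mono_ae ?_
            filter_upwards [hG01 u] with ω hω
            simpa [hd₂, ENNReal.ofReal_one] using ENNReal.ofReal_le_ofReal hω.2
        _ = 1 := by simp
        _ < ⊤ := ENNReal.one_lt_top
    have hmeq : (μ.withDensity d₁).map (fun ω => (T ω, W ω))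
        = (μ.withDensity d₂).map (fun ω => (T ω, W ω)) := by
      refine ext_of_generate_finite _ generateFrom_prod.symm isPiSystem_prod ?_ ?_
      · rintro _ ⟨s', hs', v', hv', rfl⟩
        have hs2 : MeasurableSet s' := hs'
        have hv2 : MeasurableSet v' := hv'
        rw [Measure.map_apply hp_meas (hs2.prod hv2),
          Measure.map_apply hp_meas (hs2.prod hv2),
          Set.mk_preimage_prod]
        exact hAeq s' v' hs2 hv2
      · rw [Measure.map_apply hp_meas MeasurableSet.univ,
          Measure.map_apply hp_meas MeasurableSet.univ, Set.preimage_univ]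
        have := hAeq Set.univ Set.univ MeasurableSet.univ MeasurableSet.univ
        simpa using this
    calc ∫⁻ ω, H (T ω, W ω) * d₁ ω ∂μ
        = ∫⁻ ω, (d₁ * fun ω => H (T ω, W ω)) ω ∂μ := by
          refine lintegral_congr fun ω => ?_; simp [mul_comm]
      _ = ∫⁻ ω, H (T ω, W ω) ∂(μ.withDensity d₁) :=
          (lintegral_withDensity_eq_lintegral_mul μ hd₁m (hH.comp hp_meas)).symm
      _ = ∫⁻ q, H q ∂((μ.withDensity d₁).map (fun ω => (T ω, W ω))) :=
          (lintegral_map hH hp_meas).symm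
      _ = ∫⁻ q, H q ∂((μ.withDensity d₂).map (fun ω => (T ω, W ω))) := by rw [hmeq]
      _ = ∫⁻ ω, H (T ω, W ω) ∂(μ.withDensity d₂) := lintegral_map hH hp_meas
      _ = ∫⁻ ω, (d₂ * fun ω => H (T ω, W ω)) ω ∂μ :=
          lintegral_withDensity_eq_lintegral_mul μ hd₂m (hH.comp hp_meas)
      _ = ∫⁻ ω, H (T ω, W ω) * d₂ ω ∂μ := by
          refine lintegral_congr fun ω => ?_; simp [mul_comm]
  have star : ∀ (H : ℝ × 𝓦 → ENNReal), Measurable H →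
      (∀ q, H q ≤ ENNReal.ofReal ε⁻¹) →
      ∫⁻ ω, H (T ω, W ω) * (if T ω ≤ C ω then 1 else 0) ∂μ
        = ∫⁻ ω, H (T ω, W ω) * ENNReal.ofReal (G₀ (T ω) (W ω)) ∂μ := by
    intro H hH hHb
    have h2pos : ∀ n : ℕ, (0:ℝ) < 2 ^ n := fun n => by positivity
    set b : ℕ → Ω → ℝ := fun n ω => ((⌈T ω * 2 ^ n⌉ : ℤ) - 1) / 2 ^ n with hbdef
    set kf : ℕ → Ω → ℕ := fun n ω => (⌈T ω * 2 ^ n⌉ - 1).toNat with hkfdef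
    have hknn : ∀ n ω, (0:ℤ) ≤ ⌈T ω * 2 ^ n⌉ - 1 := by
      intro n ω
      have h1 : (0:ℝ) < T ω * 2 ^ n := mul_pos (hTpos ω) (h2pos n)
      have := Int.ceil_pos.mpr h1
      omega
    have hbk : ∀ n ω, b n ω = (kf n ω : ℝ) / 2 ^ n := by
      intro n ω
      have h := hknn n ω
      have h3 : (((⌈T ω * 2 ^ n⌉ - 1).toNat : ℤ) : ℝ) = ((⌈T ω * 2 ^ n⌉ - 1 : ℤ) : ℝ) := by
        rw [Int.toNat_of_nonneg h]
      push_cast at h3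
      have h2 : ((kf n ω : ℕ) : ℝ) = (⌈T ω * 2 ^ n⌉ : ℝ) - 1 := by
        rw [hkfdef]
        dsimp only
        exact_mod_cast h3
      rw [hbdef]
      dsimp only
      rw [h2]
    have hblt : ∀ n ω, b n ω < T ω := by
      intro n ω
      rw [hbdef]
      dsimp only
      rw [div_lt_iff₀ (h2pos n)]
      have h2 := Int.le_ceil (T ω * 2 ^ n)
      have h3 : (⌈T ω * 2 ^ n⌉ : ℝ) < T ω * 2 ^ n + 1 := Int.ceil_lt_add_one _
      push_cast
      linarith
    have hble : ∀ n ω, T ω - (1/2) ^ n ≤ b n ω := by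
      intro n ω
      rw [hbdef]
      dsimp only
      rw [sub_le_iff_le_add, div_add' _ _ _ (ne_of_gt (h2pos n)), le_div_iff₀ (h2pos n)]
      have h2 := Int.le_ceil (T ω * 2 ^ n)
      have hpow : ((1:ℝ)/2) ^ n * 2 ^ n = 1 := by
        rw [div_pow, one_pow, div_mul_cancel₀]
        exact ne_of_gt (h2pos n)
      nlinarith [Int.le_ceil (T ω * 2 ^ n)]
    have htb : ∀ ω, Filter.Tendsto (fun n => b n ω) Filter.atTop (nhds (T ω)) := by
      intro ω
      have hlow : Filter.Tendsto (fun n : ℕ => T ω - (1/2) ^ n) Filter.atTop (nhds (T ω - 0)) :=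
        (tendsto_const_nhds).sub (tendsto_pow_atTop_nhds_zero_of_lt_one (by norm_num) (by norm_num))
      rw [sub_zero] at hlow
      exact tendsto_of_tendsto_of_tendsto_of_le_of_le hlow tendsto_const_nhds
        (fun n => hble n ω) (fun n => (hblt n ω).le)
    have hbm : ∀ n, Measurable (b n) := by
      intro n
      apply Measurable.div _ measurable_const
      have h1 : Measurable fun ω => (⌈T ω * 2 ^ n⌉ : ℤ) := (hT.mul measurable_const).ceil
      have h2 : Measurable fun ω => ((⌈T ω * 2 ^ n⌉ - 1 : ℤ) : ℝ) :=
        (measurable_from_top (f := fun z : ℤ => ((z - 1 : ℤ) : ℝ))).comp h1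
      simpa using h2
    -- per-n identity
    have stepn : ∀ n : ℕ,
        ∫⁻ ω, H (T ω, W ω) * (if b n ω < C ω then 1 else 0) ∂μ
          = ∫⁻ ω, H (T ω, W ω) * ENNReal.ofReal (G₀ (b n ω) (W ω)) ∂μ := by
      intro n
      set Hk : ℕ → ℝ × 𝓦 → ENNReal := fun k q =>
        H q * (if (⌈q.1 * 2 ^ n⌉ - 1).toNat = k then 1 else 0) with hHkdef
      have hHkm : ∀ k, Measurable (Hk k) := by
        intro k
        refine hH.mul ?_
        have hceil : Measurable fun q : ℝ × 𝓦 => (⌈q.1 * 2 ^ n⌉ : ℤ) :=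
          (measurable_fst.mul measurable_const).ceil
        have hset : MeasurableSet {q : ℝ × 𝓦 | (⌈q.1 * 2 ^ n⌉ - 1).toNat = k} := by
          have hpre : {q : ℝ × 𝓦 | (⌈q.1 * 2 ^ n⌉ - 1).toNat = k}
              = (fun q : ℝ × 𝓦 => ⌈q.1 * 2 ^ n⌉) ⁻¹' {z : ℤ | (z - 1).toNat = k} := rfl
          rw [hpre]
          exact hceil ((Set.to_countable _).measurableSet)
        exact Measurable.ite hset measurable_const measurable_const
      have hkfp : ∀ ω, (⌈(T ω, W ω).1 * 2 ^ n⌉ - 1).toNat = kf n ω := fun ω => rfl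
      have hsum1 : ∀ ω, H (T ω, W ω) * (if b n ω < C ω then 1 else 0)
          = ∑' k : ℕ, Hk k (T ω, W ω) * (if ((k:ℝ)/2^n) < C ω then 1 else 0) := by
        intro ω
        rw [tsum_eq_single (kf n ω) ?_]
        · rw [hHkdef]
          dsimp only
          rw [hkfp ω, if_pos rfl, mul_one, ← hbk n ω]
        · intro k' hk'
          rw [hHkdef]
          dsimp only
          rw [hkfp ω, if_neg fun h => hk' h.symm]
          rw [mul_zero, zero_mul]
      have hsum2 : ∀ ω, H (T ω, W ω) * ENNReal.ofReal (G₀ (b n ω) (W ω))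
          = ∑' k : ℕ, Hk k (T ω, W ω) * ENNReal.ofReal (G₀ ((k:ℝ)/2^n) (W ω)) := by
        intro ω
        rw [tsum_eq_single (kf n ω) ?_]
        · rw [hHkdef]
          dsimp only
          rw [hkfp ω, if_pos rfl, mul_one, ← hbk n ω]
        · intro k' hk'
          rw [hHkdef]
          dsimp only
          rw [hkfp ω, if_neg fun h => hk' h.symm]
          rw [mul_zero, zero_mul]
      calc ∫⁻ ω, H (T ω, W ω) * (if b n ω < C ω then 1 else 0) ∂μ
          = ∫⁻ ω, ∑' k : ℕ, Hk k (T ω, W ω) * (if ((k:ℝ)/2^n) < C ω then 1 else 0) ∂μ :=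
            lintegral_congr hsum1
        _ = ∑' k : ℕ, ∫⁻ ω, Hk k (T ω, W ω) * (if ((k:ℝ)/2^n) < C ω then 1 else 0) ∂μ := by
            refine lintegral_tsum fun k => ?_
            exact (((hHkm k).comp hp_meas).mul (Measurable.ite
              (measurableSet_lt measurable_const hC) measurable_const
              measurable_const)).aemeasurable
        _ = ∑' k : ℕ, ∫⁻ ω, Hk k (T ω, W ω) * ENNReal.ofReal (G₀ ((k:ℝ)/2^n) (W ω)) ∂μ := by
            refine tsum_congr fun k => ?_
            exact key ((k:ℝ)/2^n) (Hk k) (hHkm k)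
        _ = ∫⁻ ω, ∑' k : ℕ, Hk k (T ω, W ω) * ENNReal.ofReal (G₀ ((k:ℝ)/2^n) (W ω)) ∂μ := by
            refine (lintegral_tsum fun k => ?_).symm
            exact (((hHkm k).comp hp_meas).mul (ENNReal.measurable_ofReal.comp
              ((hG₀u _).comp hW))).aemeasurable
        _ = ∫⁻ ω, H (T ω, W ω) * ENNReal.ofReal (G₀ (b n ω) (W ω)) ∂μ :=
            (lintegral_congr hsum2).symm
    -- limits
    have hHfin : ∀ q, H q ≠ ⊤ := fun q => ne_top_of_le_ne_top ENNReal.ofReal_ne_top (hHb q)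
    have hlim1 : Filter.Tendsto
        (fun n => ∫⁻ ω, H (T ω, W ω) * (if b n ω < C ω then 1 else 0) ∂μ)
        Filter.atTop (nhds (∫⁻ ω, H (T ω, W ω) * (if T ω ≤ C ω then 1 else 0) ∂μ)) := by
      refine tendsto_lintegral_of_dominated_convergence (fun _ => ENNReal.ofReal ε⁻¹) ?_ ?_ ?_ ?_
      · intro n
        exact (hH.comp hp_meas).mul (Measurable.ite
          (measurableSet_lt (hbm n) hC) measurable_const measurable_const)
      · intro n
        refine Filter.Eventually.of_forall fun ω => ?_
        calc H (T ω, W ω) * (if b n ω < C ω then 1 else 0)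
            ≤ ENNReal.ofReal ε⁻¹ * 1 := by
              refine mul_le_mul' (hHb _) ?_
              by_cases h : b n ω < C ω <;> simp [h]
          _ = ENNReal.ofReal ε⁻¹ := mul_one _
      · rw [lintegral_const]
        simp only [measure_univ, mul_one]
        exact ENNReal.ofReal_ne_top
      · refine Filter.Eventually.of_forall fun ω => ?_
        by_cases h : T ω ≤ C ω
        · have heq : ∀ n, (if b n ω < C ω then (1:ENNReal) else 0) = 1 := fun n =>
            if_pos ((hblt n ω).trans_le h)
          simp only [heq, if_pos h]
          exact tendsto_const_nhds
        · push_neg at h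
          have hev : ∀ᶠ n in Filter.atTop, C ω < b n ω :=
            (htb ω).eventually_const_lt h
          rw [if_neg (not_le.mpr h), mul_zero]
          refine Filter.Tendsto.congr' ?_ tendsto_const_nhds
          symm
          filter_upwards [hev] with n hn
          rw [if_neg (not_lt.mpr hn.le), mul_zero]
    have hQ : ∀ n : ℕ, ∀ᵐ ω ∂μ, ∀ k : ℕ, 0 ≤ G₀ ((k:ℝ)/2^n) (W ω) ∧ G₀ ((k:ℝ)/2^n) (W ω) ≤ 1 :=
      fun n => ae_all_iff.mpr fun k => hG01 _
    have hlim2 : Filter.Tendsto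
        (fun n => ∫⁻ ω, H (T ω, W ω) * ENNReal.ofReal (G₀ (b n ω) (W ω)) ∂μ)
        Filter.atTop (nhds (∫⁻ ω, H (T ω, W ω) * ENNReal.ofReal (G₀ (T ω) (W ω)) ∂μ)) := by
      refine tendsto_lintegral_of_dominated_convergence (fun _ => ENNReal.ofReal ε⁻¹) ?_ ?_ ?_ ?_
      · intro n
        refine (hH.comp hp_meas).mul (ENNReal.measurable_ofReal.comp ?_)
        exact hG₀meas.comp ((hbm n).prodMk hW)
      · intro n
        filter_upwards [hQ n] with ω hω
        have h1 : ENNReal.ofReal (G₀ (b n ω) (W ω)) ≤ 1 := by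
          rw [hbk n ω]
          have := (hω (kf n ω)).2
          simpa [ENNReal.ofReal_one] using ENNReal.ofReal_le_ofReal this
        calc H (T ω, W ω) * ENNReal.ofReal (G₀ (b n ω) (W ω))
            ≤ ENNReal.ofReal ε⁻¹ * 1 := mul_le_mul' (hHb _) h1
          _ = ENNReal.ofReal ε⁻¹ := mul_one _
      · rw [lintegral_const]
        simp only [measure_univ, mul_one]
        exact ENNReal.ofReal_ne_top
      · refine Filter.Eventually.of_forall fun ω => ?_
        refine ENNReal.Tendsto.const_mul ?_ (Or.inr (hHfin _))
        refine (ENNReal.continuous_ofReal.tendsto _).comp ?_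
        exact ((hG₀cont (W ω)).tendsto (T ω)).comp (htb ω)
    have heqn : ∀ n : ℕ, (fun n => ∫⁻ ω, H (T ω, W ω) * (if b n ω < C ω then 1 else 0) ∂μ) n
        = (fun n => ∫⁻ ω, H (T ω, W ω) * ENNReal.ofReal (G₀ (b n ω) (W ω)) ∂μ) n := stepn
    exact tendsto_nhds_unique (Filter.Tendsto.congr heqn hlim1) hlim2
  -- final assembly
  set X : Ω → ℝ := fun ω => (if T ω ≤ C ω then (1:ℝ) else 0) / G₀ (min (T ω) (C ω)) (W ω)
    with hXdef
  have hXmeas : Measurable X :=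
    (Measurable.ite (measurableSet_le hT hC) measurable_const measurable_const).div
      (hG₀meas.comp ((hT.min hC).prodMk hW))
  have hXnn : ∀ᵐ ω ∂μ, 0 ≤ X ω := by
    filter_upwards [hpos] with ω hω
    rw [hXdef]
    dsimp only
    by_cases h : T ω ≤ C ω
    · rw [if_pos h, min_eq_left h]
      have hGpos : 0 < G₀ (T ω) (W ω) := lt_of_lt_of_le hε hω
      positivity
    · rw [if_neg h, zero_div]
  have hXbd : ∀ᵐ ω ∂μ, ‖X ω‖ ≤ ε⁻¹ := by
    filter_upwards [hpos] with ω hω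
    rw [hXdef]
    dsimp only
    by_cases h : T ω ≤ C ω
    · rw [if_pos h, min_eq_left h]
      have hGpos : 0 < G₀ (T ω) (W ω) := lt_of_lt_of_le hε hω
      rw [Real.norm_eq_abs, abs_of_nonneg (by positivity)]
      rw [one_div]
      exact inv_anti₀ hε hω
    · rw [if_neg h, zero_div, norm_zero]
      positivity
  have hXint : Integrable X μ :=
    (integrable_const ε⁻¹).mono' hXmeas.aestronglyMeasurable hXbd
  have hint : ∀ s : Set Ω,
      MeasurableSet[MeasurableSpace.comap (fun ω => (T ω, W ω)) inferInstance] s →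
      μ s < ⊤ → ∫ ω in s, (1:ℝ) ∂μ = ∫ ω in s, X ω ∂μ := by
    rintro _ ⟨B, hB, rfl⟩ -
    set s : Set Ω := (fun ω => (T ω, W ω)) ⁻¹' B with hsdef
    have hsm : MeasurableSet s := hp_meas hB
    set H : ℝ × 𝓦 → ENNReal := fun q =>
      (if q ∈ B then 1 else 0) * ENNReal.ofReal ((max (G₀ q.1 q.2) ε)⁻¹) with hHdef
    have hHm : Measurable H := by
      refine (Measurable.ite hB measurable_const measurable_const).mul ?_
      exact ENNReal.measurable_ofReal.comp ((hG₀meas.max measurable_const).inv)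
    have hHbnd : ∀ q, H q ≤ ENNReal.ofReal ε⁻¹ := by
      intro q
      rw [hHdef]
      dsimp only
      calc (if q ∈ B then (1:ENNReal) else 0) * ENNReal.ofReal ((max (G₀ q.1 q.2) ε)⁻¹)
          ≤ 1 * ENNReal.ofReal ε⁻¹ := by
            refine mul_le_mul' (by by_cases h : q ∈ B <;> simp [h]) ?_
            exact ENNReal.ofReal_le_ofReal (inv_anti₀ hε (le_max_right _ _))
        _ = ENNReal.ofReal ε⁻¹ := one_mul _
    have hstar := star H hHm hHbnd
    have eqR : ∫⁻ ω, H (T ω, W ω) * ENNReal.ofReal (G₀ (T ω) (W ω)) ∂μ = μ s := by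
      have hae : (fun ω => H (T ω, W ω) * ENNReal.ofReal (G₀ (T ω) (W ω)))
          =ᵐ[μ] s.indicator (fun _ => 1) := by
        filter_upwards [hpos] with ω hω
        have hGpos : 0 < G₀ (T ω) (W ω) := lt_of_lt_of_le hε hω
        rw [hHdef]
        dsimp only
        rw [max_eq_left hω, mul_assoc, ← ENNReal.ofReal_mul (by positivity),
          inv_mul_cancel₀ (ne_of_gt hGpos), ENNReal.ofReal_one, mul_one,
          Set.indicator_apply]
        by_cases h : ω ∈ s
        · rw [if_pos h, if_pos (by exact h)]
        · rw [if_neg h, if_neg (by exact h)]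
      rw [lintegral_congr_ae hae, lintegral_indicator hsm _]
      simp
    have eqL : ∫⁻ ω, H (T ω, W ω) * (if T ω ≤ C ω then 1 else 0) ∂μ
        = ENNReal.ofReal (∫ ω in s, X ω ∂μ) := by
      have hae : (fun ω => H (T ω, W ω) * (if T ω ≤ C ω then 1 else 0))
          =ᵐ[μ] s.indicator (fun ω => ENNReal.ofReal (X ω)) := by
        filter_upwards [hpos] with ω hω
        have hGpos : 0 < G₀ (T ω) (W ω) := lt_of_lt_of_le hε hω
        rw [hHdef, hXdef]
        dsimp only
        by_cases h : T ω ≤ C ω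
        · simp only [if_pos h, min_eq_left h, max_eq_left hω, mul_one, one_div,
            Set.indicator_apply]
          by_cases hb : ω ∈ s
          · rw [if_pos hb, if_pos (show (T ω, W ω) ∈ B from hb), one_mul]
          · rw [if_neg hb, if_neg (show (T ω, W ω) ∉ B from hb), zero_mul]
        · simp only [if_neg h, zero_div, mul_zero, Set.indicator_apply, ENNReal.ofReal_zero]
          by_cases hb : ω ∈ s <;> simp [hb]
      rw [lintegral_congr_ae hae, lintegral_indicator hsm _]
      rw [ofReal_integral_eq_lintegral_ofReal hXint.restrict (ae_restrict_of_ae hXnn)]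
    have hkey2 : ENNReal.ofReal (∫ ω in s, X ω ∂μ) = μ s := by
      rw [← eqL, hstar, eqR]
    have hXs_nn : 0 ≤ ∫ ω in s, X ω ∂μ :=
      integral_nonneg_of_ae (ae_restrict_of_ae hXnn)
    have h1 : ∫ ω in s, X ω ∂μ = (μ s).toReal := by
      rw [← ENNReal.toReal_ofReal hXs_nn, hkey2]
    rw [h1]
    simp [setIntegral_const, Measure.real]
  have := ae_eq_condExp_of_forall_setIntegral_eq hTWle hXint
    (fun s _ _ => (integrable_const (1:ℝ)).integrableOn)
    hint (stronglyMeasurable_const.aestronglyMeasurable)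
  exact this.symm
end

section
/- IPCW unbiasedness for the Brier loss at the truncated timescale: under T ⊥ C | W, continuity of G_0, and positivity G_0(min(T,t)|W) ≥ ε > 0, E[ Δ(t)·(1{T̃ ≥ t} - β(W))^2 / G_0(T̃(t)|W) ] = E[(1{T ≥ t} - β(W))^2], where T̃(t) = min(T,C,t) and Δ(t) = 1{min(T,t) ≤ C}. -/
open MeasureTheory ProbabilityTheory

lemma ipcw_key
    {Ω 𝓦 : Type*} [MeasurableSpace Ω] [StandardBorelSpace Ω] [Nonempty Ω]
    [MeasurableSpace 𝓦]
    (μ : Measure Ω) [IsProbabilityMeasure μ]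
    (T C : Ω → ℝ) (W : Ω → 𝓦)
    (hT : Measurable T) (hC : Measurable C) (hW : Measurable W)
    (hWle : MeasurableSpace.comap W inferInstance ≤ (inferInstance : MeasurableSpace Ω))
    (hindep : CondIndepFun (MeasurableSpace.comap W inferInstance) hWle T C μ)
    (G₀ : ℝ → 𝓦 → ℝ) (hG₀meas : Measurable (Function.uncurry G₀))
    (hG₀ : ∀ u : ℝ,
      (fun ω => G₀ u (W ω)) =ᵐ[μ]
        μ[(fun ω => if u < C ω then (1:ℝ) else 0) | MeasurableSpace.comap W inferInstance])
    (s : Set ℝ) (hs : MeasurableSet s)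
    (g : 𝓦 → ℝ) (hg : Measurable g) (c : ℝ) (hgc : ∀ w, |g w| ≤ c)
    (u : ℝ) :
    ∫ ω, Set.indicator (T ⁻¹' s) (fun _ => (1:ℝ)) ω * g (W ω)
        * (if u < C ω then (1:ℝ) else 0) ∂μ
      = ∫ ω, Set.indicator (T ⁻¹' s) (fun _ => (1:ℝ)) ω * (g (W ω) * G₀ u (W ω)) ∂μ := by
  have hWm' : Measurable[MeasurableSpace.comap W inferInstance] W :=
    Measurable.of_comap_le le_rfl
  have hgW : Measurable[MeasurableSpace.comap W inferInstance] fun ω => g (W ω) := hg.comp hWm'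
  have hGu : Measurable fun w => G₀ u w :=
    hG₀meas.comp (measurable_const.prodMk measurable_id)
  have hGuW : Measurable[MeasurableSpace.comap W inferInstance] fun ω => G₀ u (W ω) :=
    hGu.comp hWm'
  have hA : MeasurableSet (T ⁻¹' s) := hT hs
  have hB : MeasurableSet (C ⁻¹' Set.Ioi u) := hC measurableSet_Ioi
  have hite : (fun ω => if u < C ω then (1:ℝ) else 0)
      = Set.indicator (C ⁻¹' Set.Ioi u) (fun _ => (1:ℝ)) := by
    funext ω
    by_cases h : u < C ω <;> simp [Set.indicator_apply, Set.mem_Ioi, h]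
  -- integrability of indicators
  have hind_int : Integrable (Set.indicator (C ⁻¹' Set.Ioi u) (fun _ => (1:ℝ))) μ :=
    (integrable_const (1:ℝ)).indicator hB
  have hindA_int : Integrable (Set.indicator (T ⁻¹' s) (fun _ => (1:ℝ))) μ :=
    (integrable_const (1:ℝ)).indicator hA
  -- a.e. bounds on G₀ u (W ·)
  have hG01 : ∀ᵐ ω ∂μ, 0 ≤ G₀ u (W ω) ∧ G₀ u (W ω) ≤ 1 := by
    have h0 : (0:Ω → ℝ) ≤ᵐ[μ]
        μ[Set.indicator (C ⁻¹' Set.Ioi u) (fun _ => (1:ℝ)) | MeasurableSpace.comap W inferInstance] :=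
      condExp_nonneg (Filter.Eventually.of_forall fun ω => Set.indicator_nonneg (fun _ _ => zero_le_one) ω)
    have h1 : μ[Set.indicator (C ⁻¹' Set.Ioi u) (fun _ => (1:ℝ)) | MeasurableSpace.comap W inferInstance]
        ≤ᵐ[μ] μ[(fun _ => (1:ℝ)) | MeasurableSpace.comap W inferInstance] :=
      condExp_mono hind_int (integrable_const 1)
        (Filter.Eventually.of_forall fun ω => Set.indicator_le_self' (fun _ _ => zero_le_one) ω)
    rw [condExp_const hWle] at h1
    have hGa := hG₀ u
    rw [hite] at hGa
    filter_upwards [hGa, h0, h1] with ω hGa h0 h1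
    constructor
    · rw [hGa]; exact h0
    · rw [hGa]; exact h1
  set A := T ⁻¹' s with hAdef
  set B := C ⁻¹' Set.Ioi u with hBdef
  have hc0 : 0 ≤ c := (abs_nonneg _).trans (hgc (W (Classical.arbitrary Ω)))
  have habs_ind : ∀ (D : Set Ω) (ω : Ω), |Set.indicator D (fun _ => (1:ℝ)) ω| ≤ 1 := by
    intro D ω
    by_cases h : ω ∈ D <;> simp [Set.indicator_apply, h]
  -- the two products
  set f1 : Ω → ℝ := (fun ω => g (W ω)) * Set.indicator (A ∩ B) (fun _ => (1:ℝ)) with hf1def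
  set f2 : Ω → ℝ := (fun ω => g (W ω) * G₀ u (W ω)) * Set.indicator A (fun _ => (1:ℝ)) with hf2def
  have hf1meas : Measurable f1 :=
    (hg.comp hW).mul (measurable_const.indicator (hA.inter hB))
  have hf2meas : Measurable f2 :=
    ((hg.comp hW).mul (hGu.comp hW)).mul (measurable_const.indicator hA)
  have hf1int : Integrable f1 μ := by
    refine (integrable_const c).mono' hf1meas.aestronglyMeasurable ?_
    refine Filter.Eventually.of_forall fun ω => ?_
    have : |g (W ω) * Set.indicator (A ∩ B) (fun _ => (1:ℝ)) ω| ≤ c * 1 := by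
      rw [abs_mul]
      exact mul_le_mul (hgc _) (habs_ind _ _) (abs_nonneg _) hc0
    simpa [hf1def] using this
  have hf2int : Integrable f2 μ := by
    refine (integrable_const c).mono' hf2meas.aestronglyMeasurable ?_
    filter_upwards [hG01] with ω hω
    have : |g (W ω) * G₀ u (W ω) * Set.indicator A (fun _ => (1:ℝ)) ω| ≤ c * 1 * 1 := by
      rw [abs_mul, abs_mul]
      refine mul_le_mul (mul_le_mul (hgc _) ?_ (abs_nonneg _) hc0) (habs_ind _ _)
        (abs_nonneg _) (by linarith)
      rw [abs_le]; exact ⟨by linarith [hω.1], hω.2⟩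
    simpa [hf2def] using this
  have hpull1 : μ[f1|MeasurableSpace.comap W inferInstance] =ᵐ[μ] (fun ω => g (W ω)) * μ[Set.indicator (A ∩ B) (fun _ => (1:ℝ))|MeasurableSpace.comap W inferInstance] :=
    condExp_mul_of_stronglyMeasurable_left hgW.stronglyMeasurable hf1int
      ((integrable_const (1:ℝ)).indicator (hA.inter hB))
  have hpull2 : μ[f2|MeasurableSpace.comap W inferInstance] =ᵐ[μ]
      (fun ω => g (W ω) * G₀ u (W ω)) * μ[Set.indicator A (fun _ => (1:ℝ))|MeasurableSpace.comap W inferInstance] :=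
    condExp_mul_of_stronglyMeasurable_left (hgW.mul hGuW).stronglyMeasurable hf2int
      ((integrable_const (1:ℝ)).indicator hA)
  have hCI := (condIndepFun_iff _ hWle T C hT hC μ).mp hindep A B
      ⟨s, hs, rfl⟩ ⟨Set.Ioi u, measurableSet_Ioi, rfl⟩
  have hGa := hG₀ u
  rw [hite] at hGa
  have main : μ[f1|MeasurableSpace.comap W inferInstance] =ᵐ[μ] μ[f2|MeasurableSpace.comap W inferInstance] := by
    filter_upwards [hpull1, hpull2, hCI, hGa] with ω h1 h2 h3 h4
    rw [h1, h2]
    simp only [Pi.mul_apply] at h3 ⊢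
    rw [h3, ← h4]
    ring
  have e1 : (fun ω => Set.indicator A (fun _ => (1:ℝ)) ω * g (W ω)
      * (if u < C ω then (1:ℝ) else 0)) = f1 := by
    funext ω
    by_cases h1 : ω ∈ A <;> by_cases h2 : u < C ω <;>
      simp [hf1def, Set.indicator_apply, h1, h2, hBdef, Set.mem_Ioi]
  have e2 : (fun ω => Set.indicator A (fun _ => (1:ℝ)) ω * (g (W ω) * G₀ u (W ω))) = f2 := by
    funext ω
    simp only [hf2def, Pi.mul_apply]
    ring
  calc ∫ ω, Set.indicator A (fun _ => (1:ℝ)) ω * g (W ω) * (if u < C ω then (1:ℝ) else 0) ∂μ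
      = ∫ ω, f1 ω ∂μ := by rw [e1]
    _ = ∫ ω, (μ[f1|MeasurableSpace.comap W inferInstance]) ω ∂μ := (integral_condExp hWle).symm
    _ = ∫ ω, (μ[f2|MeasurableSpace.comap W inferInstance]) ω ∂μ := integral_congr_ae main
    _ = ∫ ω, f2 ω ∂μ := integral_condExp hWle
    _ = ∫ ω, Set.indicator A (fun _ => (1:ℝ)) ω * (g (W ω) * G₀ u (W ω)) ∂μ := by rw [e2]


lemma ipcw_G01
    {Ω 𝓦 : Type*} [MeasurableSpace Ω]
    [MeasurableSpace 𝓦]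
    (μ : Measure Ω) [IsProbabilityMeasure μ]
    (C : Ω → ℝ) (W : Ω → 𝓦) (hC : Measurable C)
    (hWle : MeasurableSpace.comap W inferInstance ≤ (inferInstance : MeasurableSpace Ω))
    (G₀ : ℝ → 𝓦 → ℝ)
    (hG₀ : ∀ u : ℝ,
      (fun ω => G₀ u (W ω)) =ᵐ[μ]
        μ[(fun ω => if u < C ω then (1:ℝ) else 0) | MeasurableSpace.comap W inferInstance])
    (u : ℝ) : ∀ᵐ ω ∂μ, 0 ≤ G₀ u (W ω) ∧ G₀ u (W ω) ≤ 1 := by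
  have hB : MeasurableSet (C ⁻¹' Set.Ioi u) := hC measurableSet_Ioi
  have hite : (fun ω => if u < C ω then (1:ℝ) else 0)
      = Set.indicator (C ⁻¹' Set.Ioi u) (fun _ => (1:ℝ)) := by
    funext ω
    by_cases h : u < C ω <;> simp [Set.indicator_apply, Set.mem_Ioi, h]
  have hind_int : Integrable (Set.indicator (C ⁻¹' Set.Ioi u) (fun _ => (1:ℝ))) μ :=
    (integrable_const (1:ℝ)).indicator hB
  have h0 : (0:Ω → ℝ) ≤ᵐ[μ]
      μ[Set.indicator (C ⁻¹' Set.Ioi u) (fun _ => (1:ℝ)) | MeasurableSpace.comap W inferInstance] :=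
    condExp_nonneg (Filter.Eventually.of_forall fun ω =>
      Set.indicator_nonneg (fun _ _ => zero_le_one) ω)
  have h1 : μ[Set.indicator (C ⁻¹' Set.Ioi u) (fun _ => (1:ℝ)) | MeasurableSpace.comap W inferInstance]
      ≤ᵐ[μ] μ[(fun _ => (1:ℝ)) | MeasurableSpace.comap W inferInstance] :=
    condExp_mono hind_int (integrable_const 1)
      (Filter.Eventually.of_forall fun ω => Set.indicator_le_self' (fun _ _ => zero_le_one) ω)
  rw [condExp_const hWle] at h1
  have hGa := hG₀ u
  rw [hite] at hGa
  filter_upwards [hGa, h0, h1] with ω hGa h0 h1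
  exact ⟨hGa ▸ h0, hGa ▸ h1⟩

/-- IPCW unbiasedness for the Brier loss on the truncated timescale. -/
theorem ipcw_brier_unbiased
    {Ω 𝓦 : Type*} [MeasurableSpace Ω] [StandardBorelSpace Ω] [Nonempty Ω]
    [MeasurableSpace 𝓦]
    (μ : Measure Ω) [IsProbabilityMeasure μ]
    (T C : Ω → ℝ) (W : Ω → 𝓦)
    (hT : Measurable T) (hC : Measurable C) (hW : Measurable W)
    (hWle : MeasurableSpace.comap W inferInstance ≤ (inferInstance : MeasurableSpace Ω))
    (hTpos : ∀ ω, 0 < T ω) (hCpos : ∀ ω, 0 < C ω)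
    (hindep : CondIndepFun (MeasurableSpace.comap W inferInstance) hWle T C μ)
    (t : ℝ) (ht : 0 < t)
    -- G₀(u|w) = P(C > u | W = w), continuous
    (G₀ : ℝ → 𝓦 → ℝ) (hG₀meas : Measurable (Function.uncurry G₀))
    (hG₀cont : ∀ w, Continuous fun u => G₀ u w)
    (hG₀ : ∀ u : ℝ,
      (fun ω => G₀ u (W ω)) =ᵐ[μ]
        μ[(fun ω => if u < C ω then (1:ℝ) else 0) | MeasurableSpace.comap W inferInstance])
    -- positivity on the truncated timescale
    (ε : ℝ) (hε : 0 < ε) (hpos : ∀ᵐ ω ∂μ, ε ≤ G₀ (min (T ω) t) (W ω))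
    -- bounded measurable prediction
    (β : 𝓦 → ℝ) (hβ : Measurable β) (M : ℝ) (hβbd : ∀ w, |β w| ≤ M) :
    ∫ ω, (if min (T ω) t ≤ C ω then (1:ℝ) else 0)
        * ((if t ≤ min (T ω) (C ω) then (1:ℝ) else 0) - β (W ω))^2
        / G₀ (min (min (T ω) (C ω)) t) (W ω) ∂μ
      = ∫ ω, ((if t ≤ T ω then (1:ℝ) else 0) - β (W ω))^2 ∂μ := by
  have hM0 : 0 ≤ M := (abs_nonneg _).trans (hβbd (W (Classical.arbitrary Ω)))
  -- basic objects
  set ψ : Ω → ℝ := fun ω => min (T ω) t with hψdef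
  set sq : Ω → ℝ := fun ω => ((if t ≤ T ω then (1:ℝ) else 0) - β (W ω))^2 with hsqdef
  set G' : ℝ → 𝓦 → ℝ := fun u w => max (G₀ u w) ε with hG'def
  have hψpos : ∀ ω, 0 < ψ ω := fun ω => lt_min (hTpos ω) ht
  have hψle : ∀ ω, ψ ω ≤ t := fun ω => min_le_right _ _
  have hψmeas : Measurable ψ := hT.min measurable_const
  have hG'eps : ∀ u w, ε ≤ G' u w := fun u w => le_max_right _ _
  have hG'pos : ∀ u w, 0 < G' u w := fun u w => lt_of_lt_of_le hε (hG'eps u w)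
  have hG'meas : Measurable (Function.uncurry G') := hG₀meas.max measurable_const
  have hG'cont : ∀ w, Continuous fun u => G' u w := fun w => (hG₀cont w).max continuous_const
  have hG'sec : ∀ u, Measurable fun w => G' u w := fun u =>
    hG'meas.comp (measurable_const.prodMk measurable_id)
  have hsqmeas : Measurable sq := by
    have h1 : Measurable fun ω => (if t ≤ T ω then (1:ℝ) else 0) :=
      Measurable.ite (measurableSet_le measurable_const hT) measurable_const measurable_const
    exact (h1.sub (hβ.comp hW)).pow_const 2
  have hsqbd : ∀ ω, |sq ω| ≤ (1+M)^2 := by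
    intro ω
    have h1 : |(if t ≤ T ω then (1:ℝ) else 0) - β (W ω)| ≤ 1 + M := by
      refine (abs_sub _ _).trans ?_
      have := hβbd (W ω)
      by_cases h : t ≤ T ω <;> simp [h] <;> linarith
    rw [hsqdef]
    calc |((if t ≤ T ω then (1:ℝ) else 0) - β (W ω))^2|
        = |(if t ≤ T ω then (1:ℝ) else 0) - β (W ω)|^2 := by rw [abs_pow]
      _ ≤ (1+M)^2 := by
          apply pow_le_pow_left₀ (abs_nonneg _) h1
  have hsqnn : ∀ ω, 0 ≤ sq ω := fun ω => sq_nonneg _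
  -- uniform a.e. bound on G₀
  have HGall : ∀ᵐ ω ∂μ, ∀ u : ℝ, 0 ≤ G₀ u (W ω) ∧ G₀ u (W ω) ≤ 1 := by
    have HQ : ∀ᵐ ω ∂μ, ∀ q : ℚ, 0 ≤ G₀ (q:ℝ) (W ω) ∧ G₀ (q:ℝ) (W ω) ≤ 1 :=
      (MeasureTheory.ae_all_iff).mpr fun q => ipcw_G01 μ C W hC hWle G₀ hG₀ (q:ℝ)
    filter_upwards [HQ] with ω hω
    intro u
    have hcl : IsClosed ((fun v => G₀ v (W ω)) ⁻¹' (Set.Icc 0 1)) :=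
      isClosed_Icc.preimage (hG₀cont (W ω))
    have hsub : Set.range ((↑·) : ℚ → ℝ) ⊆ (fun v => G₀ v (W ω)) ⁻¹' (Set.Icc 0 1) := by
      rintro _ ⟨q, rfl⟩
      exact Set.mem_Icc.mpr (hω q)
    have hdense : closure (Set.range ((↑·) : ℚ → ℝ)) = Set.univ :=
      Rat.denseRange_cast.closure_eq
    have : (Set.univ : Set ℝ) ⊆ (fun v => G₀ v (W ω)) ⁻¹' (Set.Icc 0 1) := by
      rw [← hdense]
      exact closure_minimal hsub hcl
    exact Set.mem_Icc.mp (this (Set.mem_univ u))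
  -- the grid
  set kn : ℕ → Ω → ℤ := fun n ω => ⌈ψ ω * n / t⌉ with hkndef
  set ll : ℕ → Ω → ℝ := fun n ω => ((kn n ω : ℝ) - 1) * (t / n) with hlldef
  set uu : ℕ → Ω → ℝ := fun n ω => (kn n ω : ℝ) * (t / n) with huudef
  have hknm : ∀ n, Measurable (kn n) := fun n =>
    Int.measurable_ceil.comp ((hψmeas.mul_const _).div_const _)
  have hllm : ∀ n, Measurable (ll n) := fun n =>
    (((measurable_from_top (f := (Int.cast : ℤ → ℝ))).comp (hknm n)).sub
      measurable_const).mul_const _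
  have huum : ∀ n, Measurable (uu n) := fun n =>
    ((measurable_from_top (f := (Int.cast : ℤ → ℝ))).comp (hknm n)).mul_const _
  have hknlb : ∀ n, 0 < n → ∀ ω, 1 ≤ kn n ω := by
    intro n hn ω
    have hn0 : (0:ℝ) < n := by exact_mod_cast hn
    have hψ0 := hψpos ω
    have hx : (0:ℝ) < ψ ω * n / t := by positivity
    have h : 0 < kn n ω := Int.ceil_pos.mpr hx
    omega
  have hknub : ∀ n, 0 < n → ∀ ω, kn n ω ≤ n := by
    intro n hn ω
    apply Int.ceil_le.mpr
    push_cast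
    rw [div_le_iff₀ ht]
    have hψt := hψle ω
    have hn' : (0:ℝ) ≤ n := Nat.cast_nonneg n
    nlinarith
  have htn : Filter.Tendsto (fun n : ℕ => t / n) Filter.atTop (nhds 0) :=
    tendsto_const_div_atTop_nhds_zero_nat t
  have hllb : ∀ n, 0 < n → ∀ ω, ψ ω - t/n ≤ ll n ω ∧ ll n ω < ψ ω := by
    intro n hn ω
    have hn0 : (0:ℝ) < n := by exact_mod_cast hn
    have htn0 : 0 < t / n := div_pos ht hn0
    have hceil1 : (ψ ω * n / t) ≤ (kn n ω : ℝ) := Int.le_ceil _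
    have hceil2 : (kn n ω : ℝ) < ψ ω * n / t + 1 := Int.ceil_lt_add_one _
    have hid : (ψ ω * n / t) * (t / n) = ψ ω := by field_simp
    constructor
    · have h := mul_le_mul_of_nonneg_right (sub_le_sub_right hceil1 1) (le_of_lt htn0)
      calc ψ ω - t/n = (ψ ω * n / t - 1) * (t/n) := by field_simp
        _ ≤ ll n ω := h
    · have h := mul_lt_mul_of_pos_right
        (by linarith : (kn n ω:ℝ) - 1 < ψ ω * n / t) htn0
      calc ll n ω < (ψ ω * n / t) * (t/n) := h
        _ = ψ ω := hid
  have huub : ∀ n, 0 < n → ∀ ω, ψ ω ≤ uu n ω ∧ uu n ω ≤ ψ ω + t/n := by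
    intro n hn ω
    have hn0 : (0:ℝ) < n := by exact_mod_cast hn
    have htn0 : 0 < t / n := div_pos ht hn0
    have hceil1 : (ψ ω * n / t) ≤ (kn n ω : ℝ) := Int.le_ceil _
    have hceil2 : (kn n ω : ℝ) < ψ ω * n / t + 1 := Int.ceil_lt_add_one _
    have hid : (ψ ω * n / t) * (t / n) = ψ ω := by field_simp
    constructor
    · calc ψ ω = (ψ ω * n / t) * (t/n) := hid.symm
        _ ≤ uu n ω := mul_le_mul_of_nonneg_right hceil1 (le_of_lt htn0)
    · have h := mul_le_mul_of_nonneg_right (le_of_lt hceil2) (le_of_lt htn0)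
      calc uu n ω ≤ (ψ ω * n / t + 1) * (t/n) := h
        _ = ψ ω + t/n := by field_simp
  have huutend : ∀ ω, Filter.Tendsto (fun n => uu n ω) Filter.atTop (nhds (ψ ω)) := by
    intro ω
    have h1 : Filter.Tendsto (fun n : ℕ => ψ ω + t/n) Filter.atTop (nhds (ψ ω)) := by
      simpa using tendsto_const_nhds.add htn
    refine tendsto_of_tendsto_of_tendsto_of_le_of_le' tendsto_const_nhds h1 ?_ ?_
    · filter_upwards [Filter.eventually_gt_atTop 0] with n hn; exact (huub n hn ω).1
    · filter_upwards [Filter.eventually_gt_atTop 0] with n hn; exact (huub n hn ω).2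
  have hlltend : ∀ ω, Filter.Tendsto (fun n => ll n ω) Filter.atTop (nhds (ψ ω)) := by
    intro ω
    have h1 : Filter.Tendsto (fun n : ℕ => ψ ω - t/n) Filter.atTop (nhds (ψ ω)) := by
      simpa using tendsto_const_nhds.sub htn
    refine tendsto_of_tendsto_of_tendsto_of_le_of_le' h1 tendsto_const_nhds ?_ ?_
    · filter_upwards [Filter.eventually_gt_atTop 0] with n hn; exact (hllb n hn ω).1
    · filter_upwards [Filter.eventually_gt_atTop 0] with n hn
      exact le_of_lt (hllb n hn ω).2
  -- the approximating sequences
  set Hn : ℕ → Ω → ℝ := fun n ω =>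
    (if ll n ω < C ω then (1:ℝ) else 0) * (sq ω / G' (uu n ω) (W ω)) with hHndef
  set Gn : ℕ → Ω → ℝ := fun n ω =>
    G₀ (ll n ω) (W ω) * (sq ω / G' (uu n ω) (W ω)) with hGndef
  -- the limit functions
  set hfin : Ω → ℝ := fun ω =>
    (if ψ ω ≤ C ω then (1:ℝ) else 0) * (sq ω / G' (ψ ω) (W ω)) with hhfindef
  set gfin : Ω → ℝ := fun ω =>
    G₀ (ψ ω) (W ω) * (sq ω / G' (ψ ω) (W ω)) with hgfindef
  have hquotbd : ∀ (u : ℝ) (ω : Ω), |sq ω / G' u (W ω)| ≤ (1+M)^2 / ε := by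
    intro u ω
    rw [abs_div, abs_of_pos (hG'pos _ _)]
    exact div_le_div₀ (by positivity) (hsqbd ω) hε (hG'eps _ _)
  have hHnm : ∀ n, Measurable (Hn n) := by
    intro n
    have h1 : Measurable fun ω => (if ll n ω < C ω then (1:ℝ) else 0) :=
      Measurable.ite (measurableSet_lt (hllm n) hC) measurable_const measurable_const
    have h2 : Measurable fun ω => G' (uu n ω) (W ω) := hG'meas.comp ((huum n).prodMk hW)
    exact h1.mul (hsqmeas.div h2)
  have hGnm : ∀ n, Measurable (Gn n) := by
    intro n
    have h1 : Measurable fun ω => G₀ (ll n ω) (W ω) := hG₀meas.comp ((hllm n).prodMk hW)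
    have h2 : Measurable fun ω => G' (uu n ω) (W ω) := hG'meas.comp ((huum n).prodMk hW)
    exact h1.mul (hsqmeas.div h2)
  have hqtend : ∀ ω, Filter.Tendsto (fun n => sq ω / G' (uu n ω) (W ω)) Filter.atTop
      (nhds (sq ω / G' (ψ ω) (W ω))) := by
    intro ω
    have hGt : Filter.Tendsto (fun n => G' (uu n ω) (W ω)) Filter.atTop
        (nhds (G' (ψ ω) (W ω))) :=
      ((hG'cont (W ω)).tendsto (ψ ω)).comp (huutend ω)
    exact Filter.Tendsto.div tendsto_const_nhds hGt (ne_of_gt (hG'pos _ _))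
  have T1 : Filter.Tendsto (fun n => ∫ ω, Hn n ω ∂μ) Filter.atTop
      (nhds (∫ ω, hfin ω ∂μ)) := by
    apply MeasureTheory.tendsto_integral_of_dominated_convergence (fun _ => (1+M)^2/ε)
    · exact fun n => (hHnm n).aestronglyMeasurable
    · exact integrable_const _
    · intro n
      refine Filter.Eventually.of_forall fun ω => ?_
      rw [Real.norm_eq_abs]
      simp only [hHndef]
      calc |(if ll n ω < C ω then (1:ℝ) else 0) * (sq ω / G' (uu n ω) (W ω))|
          = |(if ll n ω < C ω then (1:ℝ) else 0)| * |sq ω / G' (uu n ω) (W ω)| := abs_mul _ _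
        _ ≤ 1 * ((1+M)^2/ε) :=
            mul_le_mul (by split <;> simp) (hquotbd _ ω) (abs_nonneg _) zero_le_one
        _ = (1+M)^2/ε := one_mul _
    · refine Filter.Eventually.of_forall fun ω => ?_
      by_cases hCc : ψ ω ≤ C ω
      · have he : (fun n => sq ω / G' (uu n ω) (W ω)) =ᶠ[Filter.atTop] fun n => Hn n ω := by
          filter_upwards [Filter.eventually_gt_atTop 0] with n hn
          simp only [hHndef]
          rw [if_pos (lt_of_lt_of_le (hllb n hn ω).2 hCc), one_mul]
        have h := (hqtend ω).congr' he
        simp only [hhfindef]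
        rw [if_pos hCc, one_mul]
        exact h
      · push_neg at hCc
        have he : (fun _ : ℕ => (0:ℝ)) =ᶠ[Filter.atTop] fun n => Hn n ω := by
          have h2 := htn.eventually_lt_const (by linarith : (0:ℝ) < ψ ω - C ω)
          filter_upwards [Filter.eventually_gt_atTop 0, h2] with n hn hn2
          simp only [hHndef]
          rw [if_neg (not_lt.mpr (by linarith [(hllb n hn ω).1] : C ω ≤ ll n ω)), zero_mul]
        have h := tendsto_const_nhds.congr' he
        simp only [hhfindef]
        rw [if_neg (not_le.mpr hCc), zero_mul]
        exact h
  have T2 : Filter.Tendsto (fun n => ∫ ω, Gn n ω ∂μ) Filter.atTop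
      (nhds (∫ ω, gfin ω ∂μ)) := by
    apply MeasureTheory.tendsto_integral_of_dominated_convergence (fun _ => 1 * ((1+M)^2/ε))
    · exact fun n => (hGnm n).aestronglyMeasurable
    · exact integrable_const _
    · intro n
      filter_upwards [HGall] with ω hω
      rw [Real.norm_eq_abs]
      simp only [hGndef]
      calc |G₀ (ll n ω) (W ω) * (sq ω / G' (uu n ω) (W ω))|
          = |G₀ (ll n ω) (W ω)| * |sq ω / G' (uu n ω) (W ω)| := abs_mul _ _
        _ ≤ 1 * ((1+M)^2/ε) := by
            refine mul_le_mul ?_ (hquotbd _ ω) (abs_nonneg _) zero_le_one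
            rw [abs_le]
            exact ⟨by linarith [(hω (ll n ω)).1], (hω (ll n ω)).2⟩
    · refine Filter.Eventually.of_forall fun ω => ?_
      have hGt : Filter.Tendsto (fun n => G₀ (ll n ω) (W ω)) Filter.atTop
          (nhds (G₀ (ψ ω) (W ω))) :=
        ((hG₀cont (W ω)).tendsto (ψ ω)).comp (hlltend ω)
      exact hGt.mul (hqtend ω)
  have HGeq : ∀ n : ℕ, 0 < n → ∫ ω, Hn n ω ∂μ = ∫ ω, Gn n ω ∂μ := by
    intro n hn
    have hn0 : (0:ℝ) < n := by exact_mod_cast hn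
    set k₀ : Ω → ℕ := fun ω => (kn n ω - 1).toNat with hk0def
    set s1 : ℕ → Set ℝ := fun k => {x | ⌈min x t * (n:ℝ) / t⌉ = (k:ℤ)+1 ∧ t ≤ x} with hs1def
    set s2 : ℕ → Set ℝ := fun k => {x | ⌈min x t * (n:ℝ) / t⌉ = (k:ℤ)+1 ∧ ¬ t ≤ x} with hs2def
    set g1 : ℕ → 𝓦 → ℝ := fun k w => (1 - β w)^2 / G' (((k:ℝ)+1) * (t/n)) w with hg1def
    set g2 : ℕ → 𝓦 → ℝ := fun k w => (β w)^2 / G' (((k:ℝ)+1) * (t/n)) w with hg2def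
    have hceilm : Measurable fun x : ℝ => ⌈min x t * (n:ℝ) / t⌉ :=
      Int.measurable_ceil.comp (((measurable_id.min measurable_const).mul_const _).div_const _)
    have hs1m : ∀ k, MeasurableSet (s1 k) := by
      intro k
      have h1 : MeasurableSet {x : ℝ | ⌈min x t * (n:ℝ) / t⌉ = (k:ℤ)+1} :=
        hceilm (MeasurableSet.singleton ((k:ℤ)+1))
      have h2 : MeasurableSet {x : ℝ | t ≤ x} := measurableSet_Ici
      exact h1.inter h2
    have hs2m : ∀ k, MeasurableSet (s2 k) := by
      intro k
      have h1 : MeasurableSet {x : ℝ | ⌈min x t * (n:ℝ) / t⌉ = (k:ℤ)+1} :=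
        hceilm (MeasurableSet.singleton ((k:ℤ)+1))
      have h2 : MeasurableSet {x : ℝ | ¬ t ≤ x} := (measurableSet_Ici (a := t)).compl
      exact h1.inter h2
    have hg1m : ∀ k, Measurable (g1 k) := fun k =>
      ((measurable_const.sub hβ).pow_const 2).div (hG'sec _)
    have hg2m : ∀ k, Measurable (g2 k) := fun k => (hβ.pow_const 2).div (hG'sec _)
    have hg1b : ∀ k w, |g1 k w| ≤ (1+M)^2/ε := by
      intro k w
      simp only [hg1def]
      rw [abs_div, abs_of_pos (hG'pos _ _)]
      refine div_le_div₀ (by positivity) ?_ hε (hG'eps _ _)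
      rw [abs_pow]
      refine pow_le_pow_left₀ (abs_nonneg _) ?_ 2
      refine (abs_sub _ _).trans ?_
      simp [hβbd w]
    have hg2b : ∀ k w, |g2 k w| ≤ (1+M)^2/ε := by
      intro k w
      simp only [hg2def]
      rw [abs_div, abs_of_pos (hG'pos _ _)]
      refine div_le_div₀ (by positivity) ?_ hε (hG'eps _ _)
      rw [abs_pow]
      have := hβbd w
      nlinarith [abs_nonneg (β w)]
    have hk0 : ∀ ω, ((k₀ ω : ℕ):ℤ) = kn n ω - 1 := by
      intro ω
      simp only [hk0def]
      exact Int.toNat_of_nonneg (by linarith [hknlb n hn ω])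
    have hk0lt : ∀ ω, k₀ ω < n := by
      intro ω
      have h1 := hk0 ω
      have h2 := hknub n hn ω
      have h3 := hknlb n hn ω
      omega
    have hk0R : ∀ ω, ((k₀ ω : ℕ):ℝ) = (kn n ω : ℝ) - 1 := by
      intro ω
      exact_mod_cast congrArg (Int.cast : ℤ → ℝ) (hk0 ω)
    have hllk : ∀ ω, ll n ω = ((k₀ ω : ℕ):ℝ) * (t/n) := by
      intro ω
      simp only [hlldef]
      rw [hk0R ω]
    have huuk : ∀ ω, uu n ω = (((k₀ ω : ℕ):ℝ) + 1) * (t/n) := by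
      intro ω
      simp only [huudef]
      rw [hk0R ω]
      ring_nf
    have hknk0 : ∀ ω, kn n ω = ((k₀ ω : ℕ):ℤ) + 1 := by
      intro ω
      have := hk0 ω
      omega
    -- the splitting identity
    have split : ∀ (D : ℕ → Ω → ℝ) (ω : Ω),
        D (k₀ ω) ω * (sq ω / G' (uu n ω) (W ω))
          = ∑ k ∈ Finset.range n,
              (Set.indicator (T ⁻¹' s1 k) (fun _ => (1:ℝ)) ω * g1 k (W ω) * D k ω
               + Set.indicator (T ⁻¹' s2 k) (fun _ => (1:ℝ)) ω * g2 k (W ω) * D k ω) := by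
      intro D ω
      have hsum := Finset.sum_eq_single_of_mem
          (f := fun k => Set.indicator (T ⁻¹' s1 k) (fun _ => (1:ℝ)) ω * g1 k (W ω) * D k ω
               + Set.indicator (T ⁻¹' s2 k) (fun _ => (1:ℝ)) ω * g2 k (W ω) * D k ω)
          (k₀ ω) (Finset.mem_range.mpr (hk0lt ω)) ?_
      · simp only [] at hsum
        rw [hsum]
        by_cases htT : t ≤ T ω
        · have h1 : ω ∈ T ⁻¹' s1 (k₀ ω) := by
            simp only [hs1def, Set.mem_preimage, Set.mem_setOf_eq]
            exact ⟨(hknk0 ω).symm ▸ rfl, htT⟩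
          have h2 : ω ∉ T ⁻¹' s2 (k₀ ω) := by
            simp only [hs2def, Set.mem_preimage, Set.mem_setOf_eq]
            intro h
            exact h.2 htT
          rw [Set.indicator_of_mem h1, Set.indicator_of_notMem h2]
          simp only [hsqdef, hg1def]
          rw [if_pos htT, huuk ω]
          ring
        · have h1 : ω ∉ T ⁻¹' s1 (k₀ ω) := by
            simp only [hs1def, Set.mem_preimage, Set.mem_setOf_eq]
            intro h
            exact htT h.2
          have h2 : ω ∈ T ⁻¹' s2 (k₀ ω) := by
            simp only [hs2def, Set.mem_preimage, Set.mem_setOf_eq]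
            exact ⟨(hknk0 ω).symm ▸ rfl, htT⟩
          rw [Set.indicator_of_mem h2, Set.indicator_of_notMem h1]
          simp only [hsqdef, hg2def]
          rw [if_neg htT, huuk ω]
          ring
      · intro b hb hbne
        have h1 : ω ∉ T ⁻¹' s1 b := by
          simp only [hs1def, Set.mem_preimage, Set.mem_setOf_eq]
          intro h
          have hthis := hknk0 ω
          have heq : kn n ω = ⌈min (T ω) t * (n:ℝ) / t⌉ := rfl
          have h' := h.1
          rw [← heq] at h'
          apply hbne
          omega
        have h2 : ω ∉ T ⁻¹' s2 b := by
          simp only [hs2def, Set.mem_preimage, Set.mem_setOf_eq]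
          intro h
          have hthis := hknk0 ω
          have heq : kn n ω = ⌈min (T ω) t * (n:ℝ) / t⌉ := rfl
          have h' := h.1
          rw [← heq] at h'
          apply hbne
          omega
        rw [Set.indicator_of_notMem h1, Set.indicator_of_notMem h2]
        ring
    -- integrability helper
    have intg : ∀ (s : Set ℝ), MeasurableSet s → ∀ (g : 𝓦 → ℝ), Measurable g →
        (∀ w, |g w| ≤ (1+M)^2/ε) → ∀ (D : Ω → ℝ), Measurable D →
        (∀ᵐ ω ∂μ, |D ω| ≤ 1) →
        Integrable (fun ω => Set.indicator (T ⁻¹' s) (fun _ => (1:ℝ)) ω * g (W ω) * D ω) μ := by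
      intro s hs g hg hgb D hD hDb
      have hmeas : Measurable fun ω =>
          Set.indicator (T ⁻¹' s) (fun _ => (1:ℝ)) ω * g (W ω) * D ω :=
        ((measurable_const.indicator (hT hs)).mul (hg.comp hW)).mul hD
      refine (integrable_const ((1+M)^2/ε)).mono' hmeas.aestronglyMeasurable ?_
      filter_upwards [hDb] with ω hDω
      rw [Real.norm_eq_abs, abs_mul, abs_mul]
      have hind : |Set.indicator (T ⁻¹' s) (fun _ => (1:ℝ)) ω| ≤ 1 := by
        by_cases h : ω ∈ T ⁻¹' s <;> simp [Set.indicator_apply, h]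
      have hb1 : 0 ≤ (1+M)^2/ε := by positivity
      calc |Set.indicator (T ⁻¹' s) (fun _ => (1:ℝ)) ω| * |g (W ω)| * |D ω|
          ≤ 1 * ((1+M)^2/ε) * 1 := by
            refine mul_le_mul (mul_le_mul hind (hgb _) (abs_nonneg _) zero_le_one) hDω
              (abs_nonneg _) (by linarith)
        _ = (1+M)^2/ε := by ring
    -- the two D's
    have hDLm : ∀ k : ℕ, Measurable fun ω => (if (k:ℝ)*(t/n) < C ω then (1:ℝ) else 0) :=
      fun k => Measurable.ite (measurableSet_lt measurable_const hC)
        measurable_const measurable_const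
    have hDLb : ∀ k : ℕ, ∀ᵐ ω ∂μ, |(if (k:ℝ)*(t/n) < C ω then (1:ℝ) else 0)| ≤ 1 := by
      intro k
      refine Filter.Eventually.of_forall fun ω => ?_
      split <;> simp
    have hDGm : ∀ k : ℕ, Measurable fun ω => G₀ ((k:ℝ)*(t/n)) (W ω) := fun k =>
      (hG₀meas.comp (measurable_const.prodMk measurable_id)).comp hW
    have hDGb : ∀ k : ℕ, ∀ᵐ ω ∂μ, |G₀ ((k:ℝ)*(t/n)) (W ω)| ≤ 1 := by
      intro k
      filter_upwards [HGall] with ω hω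
      rw [abs_le]
      exact ⟨by linarith [(hω ((k:ℝ)*(t/n))).1], (hω ((k:ℝ)*(t/n))).2⟩
    -- put everything together
    calc ∫ ω, Hn n ω ∂μ
        = ∫ ω, ∑ k ∈ Finset.range n,
            (Set.indicator (T ⁻¹' s1 k) (fun _ => (1:ℝ)) ω * g1 k (W ω)
                * (if (k:ℝ)*(t/n) < C ω then (1:ℝ) else 0)
             + Set.indicator (T ⁻¹' s2 k) (fun _ => (1:ℝ)) ω * g2 k (W ω)
                * (if (k:ℝ)*(t/n) < C ω then (1:ℝ) else 0)) ∂μ := by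
          refine integral_congr_ae (Filter.Eventually.of_forall fun ω => ?_)
          have h := split (fun k ω => if (k:ℝ)*(t/n) < C ω then (1:ℝ) else 0) ω
          simp only [] at h
          simp only [hHndef]
          rw [hllk ω]
          exact h
      _ = ∑ k ∈ Finset.range n, ∫ ω,
            (Set.indicator (T ⁻¹' s1 k) (fun _ => (1:ℝ)) ω * g1 k (W ω)
                * (if (k:ℝ)*(t/n) < C ω then (1:ℝ) else 0)
             + Set.indicator (T ⁻¹' s2 k) (fun _ => (1:ℝ)) ω * g2 k (W ω)
                * (if (k:ℝ)*(t/n) < C ω then (1:ℝ) else 0)) ∂μ := by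
          refine integral_finset_sum _ fun k _ => ?_
          exact (intg (s1 k) (hs1m k) (g1 k) (hg1m k) (hg1b k) _ (hDLm k) (hDLb k)).add
            (intg (s2 k) (hs2m k) (g2 k) (hg2m k) (hg2b k) _ (hDLm k) (hDLb k))
      _ = ∑ k ∈ Finset.range n, ∫ ω,
            (Set.indicator (T ⁻¹' s1 k) (fun _ => (1:ℝ)) ω * g1 k (W ω)
                * G₀ ((k:ℝ)*(t/n)) (W ω)
             + Set.indicator (T ⁻¹' s2 k) (fun _ => (1:ℝ)) ω * g2 k (W ω)
                * G₀ ((k:ℝ)*(t/n)) (W ω)) ∂μ := by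
          refine Finset.sum_congr rfl fun k _ => ?_
          rw [integral_add
              (intg (s1 k) (hs1m k) (g1 k) (hg1m k) (hg1b k) _ (hDLm k) (hDLb k))
              (intg (s2 k) (hs2m k) (g2 k) (hg2m k) (hg2b k) _ (hDLm k) (hDLb k)),
            integral_add
              (intg (s1 k) (hs1m k) (g1 k) (hg1m k) (hg1b k) _ (hDGm k) (hDGb k))
              (intg (s2 k) (hs2m k) (g2 k) (hg2m k) (hg2b k) _ (hDGm k) (hDGb k))]
          congr 1
          · rw [ipcw_key μ T C W hT hC hW hWle hindep G₀ hG₀meas hG₀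
              (s1 k) (hs1m k) (g1 k) (hg1m k) ((1+M)^2/ε) (hg1b k) ((k:ℝ)*(t/n))]
            refine integral_congr_ae (Filter.Eventually.of_forall fun ω => ?_)
            ring
          · rw [ipcw_key μ T C W hT hC hW hWle hindep G₀ hG₀meas hG₀
              (s2 k) (hs2m k) (g2 k) (hg2m k) ((1+M)^2/ε) (hg2b k) ((k:ℝ)*(t/n))]
            refine integral_congr_ae (Filter.Eventually.of_forall fun ω => ?_)
            ring
      _ = ∫ ω, ∑ k ∈ Finset.range n,
            (Set.indicator (T ⁻¹' s1 k) (fun _ => (1:ℝ)) ω * g1 k (W ω)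
                * G₀ ((k:ℝ)*(t/n)) (W ω)
             + Set.indicator (T ⁻¹' s2 k) (fun _ => (1:ℝ)) ω * g2 k (W ω)
                * G₀ ((k:ℝ)*(t/n)) (W ω)) ∂μ := by
          refine (integral_finset_sum _ fun k _ => ?_).symm
          exact (intg (s1 k) (hs1m k) (g1 k) (hg1m k) (hg1b k) _ (hDGm k) (hDGb k)).add
            (intg (s2 k) (hs2m k) (g2 k) (hg2m k) (hg2b k) _ (hDGm k) (hDGb k))
      _ = ∫ ω, Gn n ω ∂μ := by
          refine integral_congr_ae (Filter.Eventually.of_forall fun ω => ?_)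
          have h := split (fun k ω => G₀ ((k:ℝ)*(t/n)) (W ω)) ω
          simp only [] at h
          simp only [hGndef]
          rw [hllk ω]
          exact h.symm

  have hEq : ∫ ω, hfin ω ∂μ = ∫ ω, gfin ω ∂μ := by
    have hE : (fun n => ∫ ω, Hn n ω ∂μ) =ᶠ[Filter.atTop] fun n => ∫ ω, Gn n ω ∂μ := by
      filter_upwards [Filter.eventually_gt_atTop 0] with n hn
      exact HGeq n hn
    exact tendsto_nhds_unique (T1.congr' hE) T2
  have hLHS : ∫ ω, (if min (T ω) t ≤ C ω then (1:ℝ) else 0)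
      * ((if t ≤ min (T ω) (C ω) then (1:ℝ) else 0) - β (W ω))^2
      / G₀ (min (min (T ω) (C ω)) t) (W ω) ∂μ = ∫ ω, hfin ω ∂μ := by
    apply integral_congr_ae
    filter_upwards [hpos] with ω hω
    simp only [hhfindef, hψdef, hsqdef, hG'def]
    by_cases hΔ : min (T ω) t ≤ C ω
    · have hmin : min (min (T ω) (C ω)) t = min (T ω) t := by
        rw [min_assoc]
        refine le_antisymm (min_le_min le_rfl (min_le_right _ _)) ?_
        exact le_min (min_le_left _ _) (le_min hΔ (min_le_right _ _))
      have hiff : (t ≤ min (T ω) (C ω)) ↔ (t ≤ T ω) := by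
        constructor
        · intro h; exact le_trans h (min_le_left _ _)
        · intro h
          refine le_min h ?_
          rw [min_eq_right h] at hΔ
          exact hΔ
      rw [if_pos hΔ, hmin, if_congr hiff rfl rfl, max_eq_left hω]
      ring
    · rw [if_neg hΔ]
      simp
  have hRHS : ∫ ω, gfin ω ∂μ = ∫ ω, sq ω ∂μ := by
    apply integral_congr_ae
    filter_upwards [hpos] with ω hω
    simp only [hgfindef, hψdef, hG'def]
    rw [max_eq_left hω, mul_comm, div_mul_cancel₀]
    exact ne_of_gt (lt_of_lt_of_le hε hω)
  rw [hLHS, hEq, hRHS]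
end
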